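/- arXiv:1103.2218 — 2 statements merged into one kernel-verified Lean document; each statement's English description precedes it below -/
import Mathlib

section
/- Let G = (V,E) be a finite simple graph with at least one edge, with n(G) vertices, m(G) edges, k(G) components and c(G) covered components, and let C(G) = C(G,x,y,z) be its covered components polynomial. Then the number of vertices of G of degree 1 equals [x^{k(G)+1} y^{m(G)−1} z^{c(G)}]C(G) + 2·[x^{k(G)+1} y^{m(G)−1} z^{c(G)−1}]C(G). -/
open MvPolynomial Finset
open scoped Classical

noncomputable section

variable {V : Type}

/-- The (finite) edge set of a simple graph on a finite vertex type, as a `Finset`. -/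
def edgeFinset' [Fintype V] (G : SimpleGraph V) : Finset (Sym2 V) :=
  (Set.toFinite G.edgeSet).toFinset

/-- `k(G)`: the number of connected components of `G`. -/
def kG (G : SimpleGraph V) : ℕ := Nat.card G.ConnectedComponent

/-- `c(G)`: the number of covered components of `G`, i.e. connected components
containing at least one edge. -/
def cG (G : SimpleGraph V) : ℕ :=
  Nat.card {c : G.ConnectedComponent // ∃ v w, G.Adj v w ∧ G.connectedComponentMk v = c}

/-- The covered components polynomial
`C(G,x,y,z) = ∑_{A ⊆ E} x^{k(⟨A⟩)} y^{|A|} z^{c(⟨A⟩)}` of a finite simple graph, where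
`⟨A⟩` denotes the spanning subgraph with edge set `A`, and `x = X 0`, `y = X 1`,
`z = X 2`. -/
def ccp [Fintype V] (G : SimpleGraph V) : MvPolynomial (Fin 3) ℤ :=
  ∑ A ∈ (edgeFinset' G).powerset,
    X 0 ^ kG (SimpleGraph.fromEdgeSet (A : Set (Sym2 V))) * X 1 ^ A.card *
      X 2 ^ cG (SimpleGraph.fromEdgeSet (A : Set (Sym2 V)))

/-- `[x^i y^j z^k] P`: the coefficient of the monomial `x^i y^j z^k`. -/
def coeff3 (P : MvPolynomial (Fin 3) ℤ) (i j k : ℕ) : ℤ :=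
  MvPolynomial.coeff (Finsupp.single 0 i + Finsupp.single 1 j + Finsupp.single 2 k) P

/-- The degree of the vertex `v` in `G`. -/
def degN (G : SimpleGraph V) (v : V) : ℕ := Nat.card {w : V // G.Adj v w}


namespace CCPAux

open SimpleGraph

/-- Graph with one edge deleted. -/
def Gd (G : SimpleGraph V) (a b : V) : SimpleGraph V :=
  SimpleGraph.fromEdgeSet (G.edgeSet \ {s(a, b)})

lemma gd_adj {G : SimpleGraph V} {a b x y : V} :
    (Gd G a b).Adj x y ↔ G.Adj x y ∧ s(x, y) ≠ s(a, b) := by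
  simp only [Gd, SimpleGraph.fromEdgeSet_adj, Set.mem_diff, SimpleGraph.mem_edgeSet,
    Set.mem_singleton_iff]
  constructor
  · rintro ⟨h, _⟩; exact h
  · intro h; exact ⟨h, h.1.ne⟩

lemma gd_le {G : SimpleGraph V} {a b : V} : Gd G a b ≤ G := fun _ _ h => (gd_adj.mp h).1

lemma gd_comm {G : SimpleGraph V} {a b : V} : Gd G a b = Gd G b a := by
  rw [Gd, Gd, Sym2.eq_swap]

lemma isolated_reachable {H : SimpleGraph V} {x y : V} (h : ∀ z, ¬ H.Adj x z)
    (hr : H.Reachable x y) : x = y := by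
  obtain ⟨w⟩ := hr
  cases w with
  | nil => rfl
  | cons h' _ => exact absurd h' (h _)

lemma reachable_adj_exists {H : SimpleGraph V} {x p q : V} (hr : H.Reachable x p)
    (hpq : H.Adj p q) : ∃ z, H.Adj x z := by
  obtain ⟨w⟩ := hr
  cases w with
  | nil => exact ⟨q, hpq⟩
  | cons h' _ => exact ⟨_, h'⟩

lemma reachable_ne_exists_adj {H : SimpleGraph V} {x y : V} (hr : H.Reachable x y)
    (hne : x ≠ y) : ∃ z, H.Adj x z := by
  obtain ⟨w⟩ := hr
  cases w with
  | nil => exact absurd rfl hne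
  | cons h' _ => exact ⟨_, h'⟩

lemma walk_split {G : SimpleGraph V} {a b x y : V} (w : G.Walk x y) :
    (Gd G a b).Reachable x y ∨
      (((Gd G a b).Reachable x a ∨ (Gd G a b).Reachable x b) ∧
       ((Gd G a b).Reachable y a ∨ (Gd G a b).Reachable y b)) := by
  induction w with
  | nil => exact Or.inl (SimpleGraph.Reachable.refl _)
  | @cons x z y hxz w ih =>
    by_cases he : s(x, z) = s(a, b)
    · have hx : x = a ∨ x = b := by
        rcases Sym2.eq_iff.mp he with ⟨h1, _⟩ | ⟨h1, _⟩
        · exact Or.inl h1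
        · exact Or.inr h1
      have hz : z = a ∨ z = b := by
        rcases Sym2.eq_iff.mp he with ⟨_, h2⟩ | ⟨_, h2⟩
        · exact Or.inr h2
        · exact Or.inl h2
      have hxr : (Gd G a b).Reachable x a ∨ (Gd G a b).Reachable x b := by
        rcases hx with h | h <;> subst h
        · exact Or.inl (SimpleGraph.Reachable.refl _)
        · exact Or.inr (SimpleGraph.Reachable.refl _)
      rcases ih with h | ⟨_, hy⟩
      · refine Or.inr ⟨hxr, ?_⟩
        rcases hz with h' | h' <;> subst h'
        · exact Or.inl h.symm
        · exact Or.inr h.symm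
      · exact Or.inr ⟨hxr, hy⟩
    · have hadj : (Gd G a b).Adj x z := gd_adj.mpr ⟨hxz, he⟩
      rcases ih with h | ⟨hz', hy⟩
      · exact Or.inl (hadj.reachable.trans h)
      · refine Or.inr ⟨?_, hy⟩
        rcases hz' with h' | h'
        · exact Or.inl (hadj.reachable.trans h')
        · exact Or.inr (hadj.reachable.trans h')

lemma reach_to_ab {G : SimpleGraph V} {a b x : V} (h : G.Reachable x a) :
    (Gd G a b).Reachable x a ∨ (Gd G a b).Reachable x b := by
  obtain ⟨w⟩ := h
  rcases walk_split (a := a) (b := b) w with h | ⟨hx, _⟩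
  · exact Or.inl h
  · exact hx

lemma reach_of_not_b {G : SimpleGraph V} {a b x y : V} (h : G.Reachable x y)
    (hx : ¬ (Gd G a b).Reachable x b) (hy : ¬ (Gd G a b).Reachable y b) :
    (Gd G a b).Reachable x y := by
  obtain ⟨w⟩ := h
  rcases walk_split (a := a) (b := b) w with h | ⟨hx', hy'⟩
  · exact h
  · exact (hx'.resolve_right hx).trans (hy'.resolve_right hy).symm

lemma reach_down {G : SimpleGraph V} {a b : V} (hr : (Gd G a b).Reachable a b)
    {x y : V} (h : G.Reachable x y) : (Gd G a b).Reachable x y := by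
  obtain ⟨w⟩ := h
  induction w with
  | nil => exact SimpleGraph.Reachable.refl _
  | @cons x z y hxz w ih =>
    by_cases he : s(x, z) = s(a, b)
    · have hxzr : (Gd G a b).Reachable x z := by
        rcases Sym2.eq_iff.mp he with ⟨h1, h2⟩ | ⟨h1, h2⟩
        · subst h1; subst h2; exact hr
        · subst h1; subst h2; exact hr.symm
      exact hxzr.trans ih
    · exact ((gd_adj.mpr ⟨hxz, he⟩).reachable).trans ih


/-- the natural map on components induced by `Gd G a b ≤ G`. -/
def psi (G : SimpleGraph V) (a b : V) :
    (Gd G a b).ConnectedComponent → G.ConnectedComponent :=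
  SimpleGraph.ConnectedComponent.map (SimpleGraph.Hom.ofLE gd_le)

@[simp] lemma psi_mk {G : SimpleGraph V} {a b x : V} :
    psi G a b ((Gd G a b).connectedComponentMk x) = G.connectedComponentMk x := rfl

noncomputable local instance ccFintype [Fintype V] (G : SimpleGraph V) :
    Fintype G.ConnectedComponent := Fintype.ofFinite _

/-- covered components as a predicate -/
def Cov (H : SimpleGraph V) (C : H.ConnectedComponent) : Prop :=
  ∃ v w, H.Adj v w ∧ H.connectedComponentMk v = C

lemma cov_iff_neighbor {H : SimpleGraph V} {x : V} :
    Cov H (H.connectedComponentMk x) ↔ ∃ z, H.Adj x z := by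
  constructor
  · rintro ⟨p, q, hpq, hp⟩
    exact reachable_adj_exists (SimpleGraph.ConnectedComponent.exact hp.symm) hpq
  · rintro ⟨z, hz⟩
    exact ⟨x, z, hz, rfl⟩

lemma kG_eq_card [Fintype V] (H : SimpleGraph V) :
    kG H = (univ : Finset H.ConnectedComponent).card := by
  rw [kG, Nat.card_eq_fintype_card, Finset.card_univ]

lemma cG_eq_card [Fintype V] (H : SimpleGraph V) :
    cG H = (univ.filter (Cov H)).card := by
  rw [cG, Nat.card_eq_fintype_card, Fintype.card_subtype]
  exact congrArg Finset.card (Finset.filter_congr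
    (p := fun x => ∃ v w, H.Adj v w ∧ H.connectedComponentMk v = x) (q := Cov H)
    (s := univ) (fun x _ => Iff.rfl))

lemma bridge_k [Fintype V] {G : SimpleGraph V} {a b : V} (hab : G.Adj a b)
    (hbr : ¬ (Gd G a b).Reachable a b) : kG (Gd G a b) = kG G + 1 := by
  classical
  have hne : (Gd G a b).connectedComponentMk a ≠ (Gd G a b).connectedComponentMk b :=
    fun h => hbr (SimpleGraph.ConnectedComponent.exact h)
  rw [kG_eq_card, kG_eq_card]
  rw [Finset.card_eq_sum_card_fiberwise
    (f := psi G a b) (t := (univ : Finset G.ConnectedComponent)) (fun C _ => mem_univ _)]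
  have hfib : ∀ D : G.ConnectedComponent,
      (univ.filter (fun C => psi G a b C = D)).card =
        if D = G.connectedComponentMk a then 2 else 1 := by
    intro D
    induction D using SimpleGraph.ConnectedComponent.ind with
    | _ x =>
    by_cases hD : G.connectedComponentMk x = G.connectedComponentMk a
    · rw [if_pos hD]
      have hset : (univ.filter (fun C => psi G a b C = G.connectedComponentMk x)) =
          {(Gd G a b).connectedComponentMk a, (Gd G a b).connectedComponentMk b} := by
        ext C
        induction C using SimpleGraph.ConnectedComponent.ind with
        | _ y =>
        simp only [mem_filter, mem_univ, true_and, mem_insert, mem_singleton, psi_mk]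
        constructor
        · intro h
          have hr : G.Reachable y a := SimpleGraph.ConnectedComponent.exact (h.trans hD)
          rcases reach_to_ab hr with h' | h'
          · exact Or.inl (SimpleGraph.ConnectedComponent.sound h')
          · exact Or.inr (SimpleGraph.ConnectedComponent.sound h')
        · rintro (h | h)
          · exact (SimpleGraph.ConnectedComponent.sound
              ((SimpleGraph.ConnectedComponent.exact h).mono gd_le)).trans hD.symm
          · exact (SimpleGraph.ConnectedComponent.sound
              (((SimpleGraph.ConnectedComponent.exact h).mono gd_le).trans
                hab.reachable.symm)).trans hD.symm
      rw [hset, Finset.card_pair hne]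
    · rw [if_neg hD]
      have hset : (univ.filter (fun C => psi G a b C = G.connectedComponentMk x)) =
          {(Gd G a b).connectedComponentMk x} := by
        ext C
        induction C using SimpleGraph.ConnectedComponent.ind with
        | _ y =>
        simp only [mem_filter, mem_univ, true_and, mem_singleton, psi_mk]
        constructor
        · intro h
          have hr : G.Reachable y x := SimpleGraph.ConnectedComponent.exact h
          have hyb : ¬ (Gd G a b).Reachable y b := by
            intro h'
            exact hD (by
              rw [← h]
              exact (SimpleGraph.ConnectedComponent.sound ((h'.mono gd_le).trans
                hab.reachable.symm)).symm ▸ rfl)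
          have hxb : ¬ (Gd G a b).Reachable x b := by
            intro h'
            exact hD (SimpleGraph.ConnectedComponent.sound ((h'.mono gd_le).trans
              hab.reachable.symm))
          exact SimpleGraph.ConnectedComponent.sound (reach_of_not_b hr hyb hxb)
        · intro h
          rw [SimpleGraph.ConnectedComponent.eq] at h
          exact SimpleGraph.ConnectedComponent.sound ((h.mono gd_le))
      rw [hset, Finset.card_singleton]
  rw [Finset.sum_congr rfl (fun D _ => hfib D)]
  have h2 : ∀ D : G.ConnectedComponent,
      (if D = G.connectedComponentMk a then (2:ℕ) else 1) =
        1 + (if D = G.connectedComponentMk a then 1 else 0) := by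
    intro D; split <;> rfl
  rw [Finset.sum_congr rfl (fun D _ => h2 D), Finset.sum_add_distrib]
  simp [Finset.sum_ite_eq' univ (G.connectedComponentMk a) (fun _ => (1:ℕ))]


lemma bridge_c [Fintype V] {G : SimpleGraph V} {a b : V} (hab : G.Adj a b)
    (hbr : ¬ (Gd G a b).Reachable a b) :
    cG (Gd G a b) + 1 = cG G +
      ((if ∃ z, (Gd G a b).Adj a z then 1 else 0) +
       (if ∃ z, (Gd G a b).Adj b z then 1 else 0)) := by
  classical
  have hne : (Gd G a b).connectedComponentMk a ≠ (Gd G a b).connectedComponentMk b :=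
    fun h => hbr (SimpleGraph.ConnectedComponent.exact h)
  have hD0mem : G.connectedComponentMk a ∈ univ.filter (Cov G) := by
    simp only [mem_filter, mem_univ, true_and]
    exact ⟨a, b, hab, rfl⟩
  rw [cG_eq_card, cG_eq_card]
  have hmaps : ∀ C ∈ univ.filter (Cov (Gd G a b)), psi G a b C ∈ univ.filter (Cov G) := by
    intro C hC
    rw [mem_filter] at hC ⊢
    obtain ⟨-, p, q, hpq, hp⟩ := hC
    exact ⟨mem_univ _, p, q, gd_le hpq, by rw [← hp]; rfl⟩
  rw [Finset.card_eq_sum_card_fiberwise hmaps]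
  rw [← Finset.sum_erase_add _ _ hD0mem]
  have hfib0 : ((univ.filter (Cov (Gd G a b))).filter
        (fun C => psi G a b C = G.connectedComponentMk a)) =
      ({(Gd G a b).connectedComponentMk a, (Gd G a b).connectedComponentMk b} :
        Finset _).filter (Cov (Gd G a b)) := by
    ext C
    induction C using SimpleGraph.ConnectedComponent.ind with
    | _ y =>
    simp only [mem_filter, mem_univ, true_and, mem_insert, mem_singleton, psi_mk]
    constructor
    · rintro ⟨hc, h⟩
      refine ⟨?_, hc⟩
      rcases reach_to_ab (SimpleGraph.ConnectedComponent.exact h) with h' | h'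
      · exact Or.inl (SimpleGraph.ConnectedComponent.sound h')
      · exact Or.inr (SimpleGraph.ConnectedComponent.sound h')
    · rintro ⟨h, hc⟩
      refine ⟨hc, ?_⟩
      rcases h with h | h
      · exact SimpleGraph.ConnectedComponent.sound
          ((SimpleGraph.ConnectedComponent.exact h).mono gd_le)
      · exact SimpleGraph.ConnectedComponent.sound
          (((SimpleGraph.ConnectedComponent.exact h).mono gd_le).trans hab.reachable.symm)
  have hcard0 : (({(Gd G a b).connectedComponentMk a, (Gd G a b).connectedComponentMk b} :
        Finset _).filter (Cov (Gd G a b))).card =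
      (if ∃ z, (Gd G a b).Adj a z then 1 else 0) +
        (if ∃ z, (Gd G a b).Adj b z then 1 else 0) := by
    rw [Finset.card_filter, Finset.sum_pair hne]
    simp only [cov_iff_neighbor]
  have hfib1 : ∀ D ∈ (univ.filter (Cov G)).erase (G.connectedComponentMk a),
      ((univ.filter (Cov (Gd G a b))).filter (fun C => psi G a b C = D)).card = 1 := by
    intro D hD
    rw [mem_erase, mem_filter] at hD
    obtain ⟨hDne, -, p, q, hpq, hp⟩ := hD
    have hpa : s(p, q) ≠ s(a, b) := by
      intro he
      apply hDne
      rw [← hp]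
      rcases Sym2.eq_iff.mp he with ⟨rfl, rfl⟩ | ⟨rfl, rfl⟩
      · rfl
      · exact SimpleGraph.ConnectedComponent.sound hab.reachable.symm
    have hpq' : (Gd G a b).Adj p q := gd_adj.mpr ⟨hpq, hpa⟩
    have hset : ((univ.filter (Cov (Gd G a b))).filter (fun C => psi G a b C = D)) =
        {(Gd G a b).connectedComponentMk p} := by
      ext C
      induction C using SimpleGraph.ConnectedComponent.ind with
      | _ y =>
      simp only [mem_filter, mem_univ, true_and, mem_singleton, psi_mk]
      constructor
      · rintro ⟨-, h⟩
        have hyp : G.Reachable y p := SimpleGraph.ConnectedComponent.exact (h.trans hp.symm)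
        have hyb : ¬ (Gd G a b).Reachable y b := fun h' => hDne (h.symm.trans
          (SimpleGraph.ConnectedComponent.sound ((h'.mono gd_le).trans hab.reachable.symm)))
        have hpb : ¬ (Gd G a b).Reachable p b := fun h' => hDne (hp.symm.trans
          (SimpleGraph.ConnectedComponent.sound ((h'.mono gd_le).trans hab.reachable.symm)))
        exact SimpleGraph.ConnectedComponent.sound (reach_of_not_b hyp hyb hpb)
      · intro h
        refine ⟨?_, ?_⟩
        · rw [h]; exact ⟨p, q, hpq', rfl⟩
        · exact (SimpleGraph.ConnectedComponent.sound
            ((SimpleGraph.ConnectedComponent.exact h).mono gd_le)).trans hp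
    rw [hset, Finset.card_singleton]
  rw [Finset.sum_congr rfl hfib1, Finset.sum_const, smul_eq_mul, mul_one, hfib0, hcard0]
  have hce := Finset.card_erase_add_one hD0mem
  omega

lemma nonbridge_k [Fintype V] {G : SimpleGraph V} {a b : V}
    (hr : (Gd G a b).Reachable a b) : kG (Gd G a b) = kG G := by
  classical
  rw [kG_eq_card, kG_eq_card]
  rw [Finset.card_eq_sum_card_fiberwise (f := psi G a b)
    (t := (univ : Finset G.ConnectedComponent)) (fun C _ => mem_univ _)]
  have hfib : ∀ D ∈ (univ : Finset G.ConnectedComponent),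
      (univ.filter (fun C => psi G a b C = D)).card = 1 := by
    intro D _
    induction D using SimpleGraph.ConnectedComponent.ind with
    | _ x =>
    have hset : univ.filter (fun C => psi G a b C = G.connectedComponentMk x) =
        {(Gd G a b).connectedComponentMk x} := by
      ext C
      induction C using SimpleGraph.ConnectedComponent.ind with
      | _ y =>
      simp only [mem_filter, mem_univ, true_and, mem_singleton, psi_mk]
      constructor
      · intro h
        exact SimpleGraph.ConnectedComponent.sound
          (reach_down hr (SimpleGraph.ConnectedComponent.exact h))
      · intro h
        exact SimpleGraph.ConnectedComponent.sound
          ((SimpleGraph.ConnectedComponent.exact h).mono gd_le)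
    rw [hset, Finset.card_singleton]
  rw [Finset.sum_congr rfl hfib]
  simp

lemma nonbridge_c [Fintype V] {G : SimpleGraph V} {a b : V} (hab : G.Adj a b)
    (hr : (Gd G a b).Reachable a b) : cG (Gd G a b) = cG G := by
  classical
  rw [cG_eq_card, cG_eq_card]
  have hmaps : ∀ C ∈ univ.filter (Cov (Gd G a b)), psi G a b C ∈ univ.filter (Cov G) := by
    intro C hC
    rw [mem_filter] at hC ⊢
    obtain ⟨-, p, q, hpq, hp⟩ := hC
    exact ⟨mem_univ _, p, q, gd_le hpq, by rw [← hp]; rfl⟩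
  rw [Finset.card_eq_sum_card_fiberwise hmaps]
  have hfib : ∀ D ∈ univ.filter (Cov G),
      ((univ.filter (Cov (Gd G a b))).filter (fun C => psi G a b C = D)).card = 1 := by
    intro D hD
    rw [mem_filter] at hD
    obtain ⟨-, p, q, hpq, hp⟩ := hD
    have hpw : ∃ q', (Gd G a b).Adj p q' := by
      by_cases he : s(p, q) = s(a, b)
      · rcases Sym2.eq_iff.mp he with ⟨rfl, rfl⟩ | ⟨rfl, rfl⟩
        · exact reachable_ne_exists_adj hr hab.ne
        · exact reachable_ne_exists_adj hr.symm hab.ne'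
      · exact ⟨q, gd_adj.mpr ⟨hpq, he⟩⟩
    obtain ⟨q', hpq'⟩ := hpw
    have hset : ((univ.filter (Cov (Gd G a b))).filter (fun C => psi G a b C = D)) =
        {(Gd G a b).connectedComponentMk p} := by
      ext C
      induction C using SimpleGraph.ConnectedComponent.ind with
      | _ y =>
      simp only [mem_filter, mem_univ, true_and, mem_singleton, psi_mk]
      constructor
      · rintro ⟨-, h⟩
        exact SimpleGraph.ConnectedComponent.sound (reach_down hr
          (SimpleGraph.ConnectedComponent.exact (h.trans hp.symm)))
      · intro h
        refine ⟨?_, ?_⟩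
        · rw [h]; exact ⟨p, q', hpq', rfl⟩
        · exact (SimpleGraph.ConnectedComponent.sound
            ((SimpleGraph.ConnectedComponent.exact h).mono gd_le)).trans hp
    rw [hset, Finset.card_singleton]
  rw [Finset.sum_congr rfl hfib]
  simp


lemma degN_one_iff {G : SimpleGraph V} {a b : V} (hab : G.Adj a b) :
    degN G a = 1 ↔ ∀ z, G.Adj a z → z = b := by
  rw [degN, Nat.card_eq_one_iff_unique]
  constructor
  · rintro ⟨hs, -⟩ z hz
    have := hs.elim ⟨z, hz⟩ ⟨b, hab⟩
    exact congrArg Subtype.val this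
  · intro h
    refine ⟨⟨fun x y => ?_⟩, ⟨b, hab⟩⟩
    obtain ⟨x, hx⟩ := x
    obtain ⟨y, hy⟩ := y
    simp only [Subtype.mk_eq_mk]
    rw [h x hx, h y hy]
  
lemma no_gd_neighbor_iff {G : SimpleGraph V} {a b : V} (hab : G.Adj a b) :
    (¬ ∃ z, (Gd G a b).Adj a z) ↔ degN G a = 1 := by
  rw [degN_one_iff hab]
  constructor
  · intro h z hz
    by_contra hne
    exact h ⟨z, gd_adj.mpr ⟨hz, fun hc => hne (Sym2.congr_right.mp hc)⟩⟩
  · rintro h ⟨z, hz⟩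
    obtain ⟨hz', hne⟩ := gd_adj.mp hz
    exact hne (by rw [h z hz'])

lemma deg_one_not_reach {G : SimpleGraph V} {a b : V} (hab : G.Adj a b)
    (hd : degN G a = 1) : ¬ (Gd G a b).Reachable a b := by
  intro hr
  have hiso : ∀ z, ¬ (Gd G a b).Adj a z := by
    have := (no_gd_neighbor_iff hab).mpr hd
    push_neg at this
    exact this
  exact hab.ne (isolated_reachable hiso hr)

lemma cG_pos [Fintype V] {G : SimpleGraph V} {a b : V} (hab : G.Adj a b) : 1 ≤ cG G := by
  have : Nonempty {c : G.ConnectedComponent //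
      ∃ v w, G.Adj v w ∧ G.connectedComponentMk v = c} := ⟨⟨_, a, b, hab, rfl⟩⟩
  have : 0 < Nat.card {c : G.ConnectedComponent //
      ∃ v w, G.Adj v w ∧ G.connectedComponentMk v = c} := Nat.card_pos
  exact this

lemma perEdge [Fintype V] {G : SimpleGraph V} {a b : V} (hab : G.Adj a b) :
    ((if kG (Gd G a b) = kG G + 1 ∧ cG (Gd G a b) = cG G then (1 : ℕ) else 0) +
      2 * (if kG (Gd G a b) = kG G + 1 ∧ cG (Gd G a b) = cG G - 1 then (1 : ℕ) else 0)) =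
    ((if degN G a = 1 then (1 : ℕ) else 0) + (if degN G b = 1 then (1 : ℕ) else 0)) := by
  classical
  have hc1 : 1 ≤ cG G := cG_pos hab
  by_cases hbr : (Gd G a b).Reachable a b
  · have h1 : ¬ degN G a = 1 := fun h => (deg_one_not_reach hab h) hbr
    have h2 : ¬ degN G b = 1 := fun h => (deg_one_not_reach hab.symm h)
      (gd_comm (a := a) ▸ hbr.symm)
    have hk := nonbridge_k hbr
    have hc := nonbridge_c hab hbr
    simp only [if_neg h1, if_neg h2]
    split_ifs <;> omega
  · have hk := bridge_k hab hbr
    have hc := bridge_c hab hbr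
    have hiffa : (∃ z, (Gd G a b).Adj a z) ↔ ¬ degN G a = 1 := by
      rw [← no_gd_neighbor_iff hab]; tauto
    have hiffb : (∃ z, (Gd G a b).Adj b z) ↔ ¬ degN G b = 1 := by
      rw [gd_comm (a := a), ← no_gd_neighbor_iff hab.symm]; tauto
    by_cases hda : degN G a = 1 <;> by_cases hdb : degN G b = 1
    · rw [if_neg (fun h => (hiffa.mp h) hda), if_neg (fun h => (hiffb.mp h) hdb)] at hc
      simp only [if_pos hda, if_pos hdb]
      split_ifs <;> omega
    · rw [if_neg (fun h => (hiffa.mp h) hda), if_pos (hiffb.mpr hdb)] at hc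
      simp only [if_pos hda, if_neg hdb]
      split_ifs <;> omega
    · rw [if_pos (hiffa.mpr hda), if_neg (fun h => (hiffb.mp h) hdb)] at hc
      simp only [if_neg hda, if_pos hdb]
      split_ifs <;> omega
    · rw [if_pos (hiffa.mpr hda), if_pos (hiffb.mpr hdb)] at hc
      simp only [if_neg hda, if_neg hdb]
      split_ifs <;> omega


lemma single_triple_eq {k m c i j t : ℕ} :
    (Finsupp.single (0 : Fin 3) k + Finsupp.single 1 m + Finsupp.single 2 c =
      Finsupp.single (0 : Fin 3) i + Finsupp.single 1 j + Finsupp.single 2 t) ↔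
    (k = i ∧ m = j ∧ c = t) := by
  constructor
  · intro h
    refine ⟨?_, ?_, ?_⟩
    · have := DFunLike.congr_fun h 0
      simpa [Finsupp.single_apply] using this
    · have := DFunLike.congr_fun h 1
      simpa [Finsupp.single_apply] using this
    · have := DFunLike.congr_fun h 2
      simpa [Finsupp.single_apply] using this
  · rintro ⟨rfl, rfl, rfl⟩; rfl

lemma coeff3_ccp [Fintype V] (G : SimpleGraph V) (i j t : ℕ) :
    coeff3 (ccp G) i j t =
      (((edgeFinset' G).powerset.filter (fun A : Finset (Sym2 V) =>
        kG (SimpleGraph.fromEdgeSet (A : Set (Sym2 V))) = i ∧ A.card = j ∧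
        cG (SimpleGraph.fromEdgeSet (A : Set (Sym2 V))) = t)).card : ℤ) := by
  classical
  rw [coeff3, ccp, MvPolynomial.coeff_sum]
  have hterm : ∀ A : Finset (Sym2 V),
      MvPolynomial.coeff (Finsupp.single 0 i + Finsupp.single 1 j + Finsupp.single 2 t)
        (X (0 : Fin 3) ^ kG (SimpleGraph.fromEdgeSet (A : Set (Sym2 V))) * X 1 ^ A.card *
          X 2 ^ cG (SimpleGraph.fromEdgeSet (A : Set (Sym2 V))) : MvPolynomial (Fin 3) ℤ) =
      if kG (SimpleGraph.fromEdgeSet (A : Set (Sym2 V))) = i ∧ A.card = j ∧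
          cG (SimpleGraph.fromEdgeSet (A : Set (Sym2 V))) = t then 1 else 0 := by
    intro A
    rw [X_pow_eq_monomial, X_pow_eq_monomial, X_pow_eq_monomial, monomial_mul, monomial_mul,
      MvPolynomial.coeff_monomial]
    simp only [one_mul]
    exact if_congr single_triple_eq rfl rfl
  rw [Finset.sum_congr rfl (fun A _ => hterm A)]
  rw [Finset.sum_boole]

lemma card_powerset_pred {α : Type} [DecidableEq α] (E : Finset α) (hE : 0 < E.card)
    (P1 P2 : Finset α → Prop) :
    (E.powerset.filter (fun A => P1 A ∧ A.card = E.card - 1 ∧ P2 A)).card =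
      (E.filter (fun e => P1 (E.erase e) ∧ P2 (E.erase e))).card := by
  classical
  rw [eq_comm]
  apply Finset.card_bij (i := fun e _ => E.erase e)
  · intro e he
    rw [mem_filter] at he
    rw [mem_filter, Finset.mem_powerset]
    exact ⟨Finset.erase_subset _ _, he.2.1, Finset.card_erase_of_mem he.1, he.2.2⟩
  · intro e1 h1 e2 h2 h
    rw [mem_filter] at h1 h2
    by_contra hne
    have h1' : e1 ∈ E.erase e2 := Finset.mem_erase.mpr ⟨hne, h1.1⟩
    rw [← h] at h1'
    exact (Finset.notMem_erase _ _) h1'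
  · intro A hA
    rw [mem_filter, Finset.mem_powerset] at hA
    obtain ⟨hAE, hP1, hcard, hP2⟩ := hA
    have hsd : (E \ A).card = 1 := by
      rw [Finset.card_sdiff_of_subset hAE]; omega
    obtain ⟨e, he⟩ := Finset.card_eq_one.mp hsd
    have heE : e ∈ E := by
      have : e ∈ E \ A := by rw [he]; exact Finset.mem_singleton_self e
      exact (Finset.mem_sdiff.mp this).1
    have hAe : E.erase e = A := by
      rw [Finset.erase_eq, ← he, Finset.sdiff_sdiff_eq_self hAE]
    refine ⟨e, ?_, hAe⟩
    rw [mem_filter]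
    refine ⟨heE, ?_, ?_⟩ <;> rw [hAe]
    · exact hP1
    · exact hP2

lemma fE_erase [Fintype V] (G : SimpleGraph V) (e : Sym2 V) :
    SimpleGraph.fromEdgeSet (((edgeFinset' G).erase e : Finset (Sym2 V)) : Set (Sym2 V)) =
      SimpleGraph.fromEdgeSet (G.edgeSet \ {e}) := by
  congr 1
  rw [Finset.coe_erase]
  congr 1
  exact Set.Finite.coe_toFinset _

/-- map a degree-one vertex to its unique incident edge -/
def Fv (G : SimpleGraph V) (v : V) : Sym2 V :=
  if h : ∃ w, G.Adj v w then s(v, h.choose) else s(v, v)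

lemma deg_one_exists {G : SimpleGraph V} {v : V} (h : degN G v = 1) : ∃ w, G.Adj v w := by
  rw [degN, Nat.card_eq_one_iff_unique] at h
  obtain ⟨⟨w, hw⟩⟩ := h.2
  exact ⟨w, hw⟩

lemma Fv_mem [Fintype V] {G : SimpleGraph V} {v : V} (h : degN G v = 1) :
    Fv G v ∈ edgeFinset' G := by
  have hex := deg_one_exists h
  rw [Fv, dif_pos hex]
  rw [edgeFinset', Set.Finite.mem_toFinset]
  exact hex.choose_spec

lemma fiber_card [Fintype V] {G : SimpleGraph V} {a b : V} (hab : G.Adj a b) :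
    ((univ.filter (fun v => degN G v = 1)).filter (fun v => Fv G v = s(a, b))).card =
      (if degN G a = 1 then (1 : ℕ) else 0) + (if degN G b = 1 then (1 : ℕ) else 0) := by
  classical
  have hset : (univ.filter (fun v => degN G v = 1)).filter (fun v => Fv G v = s(a, b)) =
      ({a, b} : Finset V).filter (fun v => degN G v = 1) := by
    ext v
    simp only [mem_filter, mem_univ, true_and, mem_insert, mem_singleton]
    constructor
    · rintro ⟨hd, hF⟩
      refine ⟨?_, hd⟩
      have hex := deg_one_exists hd
      rw [Fv, dif_pos hex] at hF
      rcases Sym2.eq_iff.mp hF with ⟨h1, -⟩ | ⟨h1, -⟩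
      · exact Or.inl h1
      · exact Or.inr h1
    · rintro ⟨hv, hd⟩
      refine ⟨hd, ?_⟩
      rcases hv with rfl | rfl
      · have hex : ∃ w, G.Adj v w := ⟨b, hab⟩
        rw [Fv, dif_pos hex]
        rw [(degN_one_iff hab).mp hd _ hex.choose_spec]
      · have hex : ∃ w, G.Adj v w := ⟨a, hab.symm⟩
        rw [Fv, dif_pos hex]
        rw [(degN_one_iff hab.symm).mp hd _ hex.choose_spec, Sym2.eq_swap]
  rw [hset, Finset.card_filter, Finset.sum_pair hab.ne]

lemma main_count [Fintype V] (G : SimpleGraph V) :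
    (univ.filter (fun v => degN G v = 1)).card =
      ((edgeFinset' G).filter (fun e =>
        kG (SimpleGraph.fromEdgeSet (((edgeFinset' G).erase e : Finset (Sym2 V)) :
          Set (Sym2 V))) = kG G + 1 ∧
        cG (SimpleGraph.fromEdgeSet (((edgeFinset' G).erase e : Finset (Sym2 V)) :
          Set (Sym2 V))) = cG G)).card +
      2 * ((edgeFinset' G).filter (fun e =>
        kG (SimpleGraph.fromEdgeSet (((edgeFinset' G).erase e : Finset (Sym2 V)) :
          Set (Sym2 V))) = kG G + 1 ∧
        cG (SimpleGraph.fromEdgeSet (((edgeFinset' G).erase e : Finset (Sym2 V)) :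
          Set (Sym2 V))) = cG G - 1)).card := by
  classical
  have hmaps : ∀ v ∈ univ.filter (fun v => degN G v = 1), Fv G v ∈ edgeFinset' G := by
    intro v hv
    rw [mem_filter] at hv
    exact Fv_mem hv.2
  rw [Finset.card_eq_sum_card_fiberwise hmaps]
  rw [Finset.card_filter, Finset.card_filter, Finset.mul_sum, ← Finset.sum_add_distrib]
  apply Finset.sum_congr rfl
  intro e he
  induction e using Sym2.ind with
  | _ a b =>
  have hab : G.Adj a b := by
    have : s(a, b) ∈ G.edgeSet := (Set.Finite.mem_toFinset _).mp he
    exact this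
  have hGd : SimpleGraph.fromEdgeSet (((edgeFinset' G).erase s(a, b) : Finset (Sym2 V)) :
      Set (Sym2 V)) = Gd G a b := fE_erase G s(a, b)
  rw [hGd, fiber_card hab]
  have := perEdge hab
  omega



lemma filter_card_congr {α : Type} (s : Finset α) (p : α → Prop)
    (h1 h2 : DecidablePred p) :
    (@Finset.filter α p h1 s).card = (@Finset.filter α p h2 s).card := by
  have : h1 = h2 := Subsingleton.elim h1 h2
  subst this
  rfl

lemma coeff3_ccp_erase [Fintype V] (G : SimpleGraph V) (h : 0 < (edgeFinset' G).card)
    (t : ℕ) :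
    coeff3 (ccp G) (kG G + 1) ((edgeFinset' G).card - 1) t =
      (((edgeFinset' G).filter (fun e =>
        kG (SimpleGraph.fromEdgeSet (((edgeFinset' G).erase e : Finset (Sym2 V)) :
          Set (Sym2 V))) = kG G + 1 ∧
        cG (SimpleGraph.fromEdgeSet (((edgeFinset' G).erase e : Finset (Sym2 V)) :
          Set (Sym2 V))) = t)).card : ℤ) := by
  rw [coeff3_ccp]
  have := card_powerset_pred (edgeFinset' G) h
    (fun A => kG (SimpleGraph.fromEdgeSet (A : Set (Sym2 V))) = kG G + 1)
    (fun A => cG (SimpleGraph.fromEdgeSet (A : Set (Sym2 V))) = t)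
  norm_cast
  exact (filter_card_congr _ _ _ _).trans (this.trans (filter_card_congr _ _ _ _))

end CCPAux

/-- Let `G` be a finite simple graph with at least one edge.  Then the
number of vertices of degree `1` equals
`[x^{k(G)+1} y^{m(G)−1} z^{c(G)}]C(G) + 2·[x^{k(G)+1} y^{m(G)−1} z^{c(G)−1}]C(G)`. -/
theorem ccp_degree_one_count {V : Type} [Fintype V] (G : SimpleGraph V)
    (h : 0 < (edgeFinset' G).card) :
    (Nat.card {v : V // degN G v = 1} : ℤ) =
      coeff3 (ccp G) (kG G + 1) ((edgeFinset' G).card - 1) (cG G) +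
      2 * coeff3 (ccp G) (kG G + 1) ((edgeFinset' G).card - 1) (cG G - 1) := by
  classical
  rw [CCPAux.coeff3_ccp_erase G h, CCPAux.coeff3_ccp_erase G h]

  have hN : Nat.card {v : V // degN G v = 1} =
      (univ.filter (fun v => degN G v = 1)).card := by
    rw [Nat.card_eq_fintype_card, Fintype.card_subtype]
  rw [hN, CCPAux.main_count G]
  push_cast
  ring


end
end

section
/- Let G = (V,E) be a finite simple graph with n(G) vertices and at least one edge, with covered components polynomial C(G) = C(G,x,y,z). Then the clique number ω(G), i.e., the maximum number of vertices of a complete subgraph of G, equals the maximum j ≥ 2 such that the coefficient of x^{n(G)−j+1} y^{C(j,2)} z^{1} in C(G) is positive, where C(j,2) = j(j−1)/2. -/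
open MvPolynomial Finset
open scoped Classical

noncomputable section

variable {V : Type}

/-- `ω(G)`: the clique number, the maximum number of vertices of a complete subgraph. -/
def cliqueNum' (G : SimpleGraph V) : ℕ :=
  sSup {j | ∃ s : Finset V, G.IsNClique j s}

/-! ### Auxiliary lemmas -/

lemma mem_edgeFinset' [Fintype V] {G : SimpleGraph V} {e : Sym2 V} :
    e ∈ edgeFinset' G ↔ e ∈ G.edgeSet := Set.Finite.mem_toFinset _

lemma isolated_reachable {H : SimpleGraph V} {v w : V} (hv : ∀ w, ¬ H.Adj v w)
    (h : H.Reachable v w) : v = w := by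
  obtain ⟨p⟩ := h
  cases p with
  | nil => rfl
  | cons h' _ => exact absurd h' (hv _)

lemma kG_split [Fintype V] (H : SimpleGraph V) :
    kG H = cG H + Nat.card {v : V // ∀ w, ¬ H.Adj v w} := by
  classical
  have hsum : Nat.card H.ConnectedComponent
      = cG H + Nat.card {c : H.ConnectedComponent //
        ¬ ∃ v w, H.Adj v w ∧ H.connectedComponentMk v = c} := by
    rw [cG]
    calc Nat.card H.ConnectedComponent
        = Nat.card ({c : H.ConnectedComponent // ∃ v w, H.Adj v w ∧ H.connectedComponentMk v = c}
          ⊕ {c : H.ConnectedComponent // ¬ ∃ v w, H.Adj v w ∧ H.connectedComponentMk v = c}) :=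
          (Nat.card_congr (Equiv.sumCompl _)).symm
      _ = _ := Nat.card_sum
  have hbij : Nat.card {c : H.ConnectedComponent //
        ¬ ∃ v w, H.Adj v w ∧ H.connectedComponentMk v = c}
      = Nat.card {v : V // ∀ w, ¬ H.Adj v w} := by
    refine (Nat.card_congr (Equiv.ofBijective
      (fun v : {v : V // ∀ w, ¬ H.Adj v w} =>
        (⟨H.connectedComponentMk v.1, ?_⟩ : {c : H.ConnectedComponent //
          ¬ ∃ v w, H.Adj v w ∧ H.connectedComponentMk v = c})) ⟨?_, ?_⟩)).symm
    · rintro ⟨a, b, hab, hc⟩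
      have : a = v.1 := by
        have := SimpleGraph.ConnectedComponent.exact hc
        exact (isolated_reachable v.2 this.symm).symm
      exact v.2 b (this ▸ hab)
    · rintro ⟨v, hv⟩ ⟨w, hw⟩ h
      have h2 : H.connectedComponentMk v = H.connectedComponentMk w := congrArg Subtype.val h
      exact Subtype.ext (isolated_reachable hv (SimpleGraph.ConnectedComponent.exact h2))
    · rintro ⟨c, hc⟩
      obtain ⟨v, rfl⟩ := c.exists_rep
      refine ⟨⟨v, fun w hw => hc ⟨v, w, hw, rfl⟩⟩, rfl⟩
  rw [kG, hsum, hbij]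

lemma card_pairs (S : Finset V) :
    (S.sym2.filter fun e => ¬ e.IsDiag).card = S.card.choose 2 := by
  classical
  have h1 : Fintype.card {e : Sym2 ↥S // ¬ e.IsDiag} = S.card.choose 2 := by
    rw [Sym2.card_subtype_not_diag, Fintype.card_coe]
  rw [← h1, ← Fintype.card_coe]
  have hf : ∀ e : {e : Sym2 ↥S // ¬ e.IsDiag},
      (Sym2.map Subtype.val e.1 : Sym2 V) ∈ S.sym2.filter fun e => ¬ e.IsDiag := by
    rintro ⟨e, he⟩
    have hmem : (Sym2.map Subtype.val e : Sym2 V) ∈ S.sym2 := by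
      obtain ⟨⟨a, b⟩, rfl⟩ := e.exists_rep
      simp only [Sym2.map_pair_eq]
      exact Finset.mk_mem_sym2_iff.2 ⟨a.2, b.2⟩
    have hdiag : ¬ (Sym2.map Subtype.val e).IsDiag := by
      rw [Sym2.isDiag_map Subtype.val_injective]; exact he
    exact Finset.mem_filter.2 ⟨hmem, hdiag⟩
  refine Fintype.card_congr (Equiv.ofBijective
    (fun e : {e : Sym2 ↥S // ¬ e.IsDiag} =>
      (⟨Sym2.map Subtype.val e.1, hf e⟩ : ↥(S.sym2.filter fun e => ¬ e.IsDiag)))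
    ⟨?_, ?_⟩).symm
  · rintro ⟨e1, h1'⟩ ⟨e2, h2'⟩ h
    have h' : Sym2.map Subtype.val e1 = Sym2.map Subtype.val e2 := congrArg Subtype.val h
    exact Subtype.ext (Sym2.map.injective Subtype.val_injective h')
  · rintro ⟨e, he⟩
    have he' := Finset.mem_filter.1 he
    obtain ⟨⟨a, b⟩, rfl⟩ := e.exists_rep
    have hab : a ∈ S ∧ b ∈ S := Finset.mk_mem_sym2_iff.1 he'.1
    refine ⟨⟨s(⟨a, hab.1⟩, ⟨b, hab.2⟩), ?_⟩, ?_⟩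
    · simpa using he'.2
    · apply Subtype.ext
      simp [Sym2.map_pair_eq]

lemma single_triple_inj {a b c i m c0 : ℕ} :
    (Finsupp.single 0 a + Finsupp.single 1 b + Finsupp.single 2 c : Fin 3 →₀ ℕ)
      = Finsupp.single 0 i + Finsupp.single 1 m + Finsupp.single 2 c0
    ↔ a = i ∧ b = m ∧ c = c0 := by
  constructor
  · intro h
    have h0 := DFunLike.congr_fun h 0
    have h1 := DFunLike.congr_fun h 1
    have h2 := DFunLike.congr_fun h 2
    simp [Finsupp.single_apply, Finsupp.add_apply] at h0 h1 h2
    exact ⟨h0, h1, h2⟩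
  · rintro ⟨rfl, rfl, rfl⟩; rfl

lemma coeff3_ccp [Fintype V] (G : SimpleGraph V) (i m c0 : ℕ) :
    coeff3 (ccp G) i m c0 = ((edgeFinset' G).powerset.filter
      (fun A : Finset (Sym2 V) => kG (SimpleGraph.fromEdgeSet (A : Set (Sym2 V))) = i ∧
        A.card = m ∧ cG (SimpleGraph.fromEdgeSet (A : Set (Sym2 V))) = c0)).card := by
  rw [coeff3, ccp, MvPolynomial.coeff_sum]
  rw [← Finset.sum_boole]
  apply Finset.sum_congr rfl
  intro A _
  rw [X_pow_eq_monomial, X_pow_eq_monomial, X_pow_eq_monomial, monomial_mul, monomial_mul,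
    coeff_monomial]
  simp only [one_mul]
  by_cases hc : kG (SimpleGraph.fromEdgeSet (A : Set (Sym2 V))) = i ∧ A.card = m ∧
      cG (SimpleGraph.fromEdgeSet (A : Set (Sym2 V))) = c0
  · rw [if_pos (single_triple_inj.2 hc), if_pos hc]
  · rw [if_neg (fun h => hc (single_triple_inj.1 h)), if_neg hc]

section CliqueSide
variable [Fintype V] {G : SimpleGraph V} {s : Finset V} {j : ℕ}

lemma pairs_subset_edgeFinset (hs : G.IsClique ↑s) :
    (s.sym2.filter fun e => ¬ e.IsDiag) ⊆ edgeFinset' G := by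
  intro e he
  rw [Finset.mem_filter] at he
  obtain ⟨⟨a, b⟩, rfl⟩ := e.exists_rep
  obtain ⟨ha, hb⟩ := Finset.mk_mem_sym2_iff.1 he.1
  have hab : a ≠ b := by simpa using he.2
  exact mem_edgeFinset'.2 ((SimpleGraph.mem_edgeSet G).2 (hs ha hb hab))

omit [Fintype V] in
lemma pairsGraph_adj (s : Finset V) (u v : V) :
    (SimpleGraph.fromEdgeSet ((s.sym2.filter fun e => ¬ e.IsDiag : Finset (Sym2 V)) :
      Set (Sym2 V))).Adj u v ↔ u ∈ s ∧ v ∈ s ∧ u ≠ v := by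
  rw [SimpleGraph.fromEdgeSet_adj]
  simp only [Finset.mem_coe, Finset.mem_filter, Finset.mk_mem_sym2_iff, Sym2.mk_isDiag_iff]
  tauto

omit [Fintype V] in
lemma cG_pairsGraph (hs : 2 ≤ s.card) :
    cG (SimpleGraph.fromEdgeSet ((s.sym2.filter fun e => ¬ e.IsDiag : Finset (Sym2 V)) :
      Set (Sym2 V))) = 1 := by
  set H := SimpleGraph.fromEdgeSet ((s.sym2.filter fun e => ¬ e.IsDiag : Finset (Sym2 V)) :
      Set (Sym2 V)) with hH
  rw [cG, Nat.card_eq_one_iff_unique]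
  constructor
  · constructor
    rintro ⟨c1, a, b, hab, h1⟩ ⟨c2, a', b', hab', h2⟩
    have ha : a ∈ s := ((pairsGraph_adj s a b).1 hab).1
    have ha' : a' ∈ s := ((pairsGraph_adj s a' b').1 hab').1
    have : H.connectedComponentMk a = H.connectedComponentMk a' := by
      by_cases hx : a = a'
      · rw [hx]
      · exact SimpleGraph.ConnectedComponent.sound
          (SimpleGraph.Adj.reachable ((pairsGraph_adj s a a').2 ⟨ha, ha', hx⟩))
    exact Subtype.ext (h1 ▸ h2 ▸ this)
  · obtain ⟨a, ha, b, hb, hab⟩ := Finset.one_lt_card.1 hs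
    exact ⟨⟨H.connectedComponentMk a, a, b, (pairsGraph_adj s a b).2 ⟨ha, hb, hab⟩, rfl⟩⟩

lemma kG_pairsGraph (hs : 2 ≤ s.card) :
    kG (SimpleGraph.fromEdgeSet ((s.sym2.filter fun e => ¬ e.IsDiag : Finset (Sym2 V)) :
      Set (Sym2 V))) = 1 + (Fintype.card V - s.card) := by
  set H := SimpleGraph.fromEdgeSet ((s.sym2.filter fun e => ¬ e.IsDiag : Finset (Sym2 V)) :
      Set (Sym2 V)) with hH
  rw [kG_split, cG_pairsGraph hs]
  congr 1
  have hiso : ∀ v : V, (∀ w, ¬ H.Adj v w) ↔ v ∉ s := by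
    intro v
    constructor
    · intro hv hvs
      obtain ⟨w, hw, hwv⟩ := Finset.exists_mem_ne hs v
      exact hv w ((pairsGraph_adj s v w).2 ⟨hvs, hw, fun h => hwv h.symm⟩)
    · intro hvs w hw
      exact hvs ((pairsGraph_adj s v w).1 hw).1
  rw [Nat.card_congr (Equiv.subtypeEquivRight hiso), Nat.card_eq_fintype_card,
    Fintype.card_subtype_compl]
  congr 1
  exact Fintype.card_coe s

end CliqueSide

lemma clique_of_A [Fintype V] {G : SimpleGraph V} {A : Finset (Sym2 V)} {i j : ℕ}
    (hA : A ⊆ edgeFinset' G)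
    (hk : kG (SimpleGraph.fromEdgeSet (A : Set (Sym2 V))) = i)
    (hc : cG (SimpleGraph.fromEdgeSet (A : Set (Sym2 V))) = 1)
    (hcard : A.card = j.choose 2) (hij : i + j = Fintype.card V + 1) :
    ∃ s : Finset V, G.IsNClique j s := by
  classical
  set H := SimpleGraph.fromEdgeSet (A : Set (Sym2 V)) with hH
  set S : Finset V := univ.filter (fun v => ∃ w, H.Adj v w) with hS
  have hiso : Nat.card {v : V // ∀ w, ¬ H.Adj v w} = Fintype.card V - S.card := by
    rw [Nat.card_eq_fintype_card, Fintype.card_subtype]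
    have h1 : (univ.filter fun v : V => ∀ w, ¬ H.Adj v w)
        = univ.filter (fun v : V => ¬ ∃ w, H.Adj v w) := by
      apply Finset.filter_congr; intro v _; exact (not_exists).symm
    have h2 := Finset.card_filter_add_card_filter_not
      (s := (univ : Finset V)) (p := fun v : V => ∃ w, H.Adj v w)
    rw [h1]
    rw [Finset.card_univ, show univ.filter (fun v : V => ∃ w, H.Adj v w) = S from hS.symm] at h2
    omega
  have hS_le : S.card ≤ Fintype.card V := by
    simpa using Finset.card_le_card (Finset.filter_subset _ (univ : Finset V))
  have hkk := kG_split H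
  rw [hk, hc, hiso] at hkk
  have hScard : S.card = j := by omega
  have hsub : A ⊆ S.sym2.filter fun e => ¬ e.IsDiag := by
    intro e he
    obtain ⟨⟨a, b⟩, rfl⟩ := e.exists_rep
    have hes : s(a, b) ∈ G.edgeSet := mem_edgeFinset'.1 (hA he)
    have hdiag : ¬ (s(a, b) : Sym2 V).IsDiag := G.not_isDiag_of_mem_edgeSet hes
    have hab : a ≠ b := by simpa using hdiag
    have hadj : H.Adj a b := (SimpleGraph.fromEdgeSet_adj _).2 ⟨he, hab⟩
    refine Finset.mem_filter.2 ⟨Finset.mk_mem_sym2_iff.2 ⟨?_, ?_⟩, hdiag⟩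
    · exact Finset.mem_filter.2 ⟨Finset.mem_univ _, ⟨b, hadj⟩⟩
    · exact Finset.mem_filter.2 ⟨Finset.mem_univ _, ⟨a, hadj.symm⟩⟩
  have hfull : A = S.sym2.filter fun e => ¬ e.IsDiag := by
    apply Finset.eq_of_subset_of_card_le hsub
    rw [card_pairs, hScard, hcard]
  refine ⟨S, ?_, hScard⟩
  intro u hu v hv huv
  have : s(u, v) ∈ A := by
    rw [hfull]
    exact Finset.mem_filter.2 ⟨Finset.mk_mem_sym2_iff.2 ⟨hu, hv⟩, by simpa using huv⟩
  exact (SimpleGraph.mem_edgeSet G).1 (mem_edgeFinset'.1 (hA this))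

/-- The coefficient set equals the set of clique sizes `≥ 2`. -/
lemma coeff_set_eq [Fintype V] (G : SimpleGraph V) :
    {j | 2 ≤ j ∧ ∃ i, i + j = Fintype.card V + 1 ∧
        0 < coeff3 (ccp G) i (j.choose 2) 1}
      = {j | 2 ≤ j ∧ ∃ s : Finset V, G.IsNClique j s} := by
  classical
  ext j
  simp only [Set.mem_setOf_eq]
  constructor
  · rintro ⟨h2j, i, hij, hpos⟩
    refine ⟨h2j, ?_⟩
    rw [coeff3_ccp] at hpos
    have hpos' : 0 < ((edgeFinset' G).powerset.filter
      (fun A : Finset (Sym2 V) => kG (SimpleGraph.fromEdgeSet (A : Set (Sym2 V))) = i ∧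
        A.card = j.choose 2 ∧ cG (SimpleGraph.fromEdgeSet (A : Set (Sym2 V))) = 1)).card :=
      Int.natCast_pos.mp hpos
    obtain ⟨A, hAmem⟩ := Finset.card_pos.1 hpos'
    rw [Finset.mem_filter, Finset.mem_powerset] at hAmem
    obtain ⟨hAsub, hk, hcard, hc⟩ := hAmem
    exact clique_of_A hAsub hk hc hcard hij
  · rintro ⟨h2j, s, hclique⟩
    have hjcard : s.card = j := hclique.2
    have h2s : 2 ≤ s.card := hjcard ▸ h2j
    have hj_le : j ≤ Fintype.card V := hjcard ▸ Finset.card_le_univ s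
    refine ⟨h2j, Fintype.card V + 1 - j, by omega, ?_⟩
    rw [coeff3_ccp]
    refine Int.natCast_pos.mpr (Finset.card_pos.2
      ⟨s.sym2.filter fun e => ¬ e.IsDiag, ?_⟩)
    rw [Finset.mem_filter, Finset.mem_powerset]
    refine ⟨pairs_subset_edgeFinset hclique.1, ?_, ?_, cG_pairsGraph h2s⟩
    · rw [kG_pairsGraph h2s, hjcard]
      omega
    · rw [card_pairs, hjcard]

/-- Let `G` be a finite simple graph on `n(G)` vertices with at least
one edge.  Then the clique number `ω(G)` equals the maximum `j ≥ 2` such that the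
coefficient of `x^{n(G)−j+1} y^{C(j,2)} z^1` in `C(G)` is positive (the exponent of `x`
being the natural number `i` with `i + j = n(G) + 1`). -/
theorem ccp_clique_number {V : Type} [Fintype V] (G : SimpleGraph V)
    (h : 0 < (edgeFinset' G).card) :
    cliqueNum' G =
      sSup {j | 2 ≤ j ∧ ∃ i, i + j = Fintype.card V + 1 ∧
        0 < coeff3 (ccp G) i (j.choose 2) 1} := by
  classical
  rw [coeff_set_eq]
  set T1 : Set ℕ := {j | ∃ s : Finset V, G.IsNClique j s} with hT1
  set T3 : Set ℕ := {j | 2 ≤ j ∧ ∃ s : Finset V, G.IsNClique j s} with hT3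
  -- there is an edge, hence a 2-clique
  obtain ⟨e, he⟩ := Finset.card_pos.1 h
  obtain ⟨⟨a, b⟩, rfl⟩ := e.exists_rep
  have hadj : G.Adj a b := (SimpleGraph.mem_edgeSet G).1 (mem_edgeFinset'.1 he)
  have hab : a ≠ b := G.ne_of_adj hadj
  have h2clique : G.IsNClique 2 {a, b} := by
    constructor
    · rw [Finset.coe_insert, Finset.coe_singleton]
      exact SimpleGraph.isClique_pair.2 fun _ => hadj
    · exact Finset.card_pair hab
  have h2T1 : (2 : ℕ) ∈ T1 := ⟨{a, b}, h2clique⟩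
  have h2T3 : (2 : ℕ) ∈ T3 := ⟨le_refl 2, {a, b}, h2clique⟩
  have hsub : T3 ⊆ T1 := fun j hj => hj.2
  have hbdd1 : BddAbove T1 := by
    refine ⟨Fintype.card V, ?_⟩
    rintro j ⟨s, hs⟩
    exact hs.2 ▸ Finset.card_le_univ s
  have hbdd3 : BddAbove T3 := hbdd1.mono hsub
  apply le_antisymm
  · have hmem : sSup T1 ∈ T1 := Nat.sSup_mem ⟨2, h2T1⟩ hbdd1
    have h2le : 2 ≤ sSup T1 := le_csSup hbdd1 h2T1
    exact le_csSup hbdd3 ⟨h2le, hmem⟩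
  · exact csSup_le_csSup hbdd1 ⟨2, h2T3⟩ hsub

end
end
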